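/- Let N ≥ 2 and let ζ_1,…,ζ_N, r_1,…,r_N ∈ ℂ with ζ_1 + ζ_2 + … + ζ_N = 0. Define A_0(t) = 1 and A_k(t) = Σ_{1≤l_1<…<l_k≤N} (r_{l_1}⋯r_{l_k})² W(l_1,…,l_k)² exp(−2(ζ_{l_1}+…+ζ_{l_k})t), W(l_1,…,l_k) = Π_{p<s, p,s∈{l_1,…,l_k}}(2ζ_s − 2ζ_p). Let I ⊆ ℝ be an open interval on which A_k(t) ≠ 0 for all k = 1,…,N, let c ∈ ℂ, and let q_1,…,q_N : I → ℂ be twice differentiable functions satisfying exp(q_k(t) − c) = A_k(t)/A_{k−1}(t) for all t ∈ I and k = 1,…,N. Then q satisfies the complex Toda chain with fixed ends on I: d²q_k/dt² = exp(q_{k+1} − q_k) − exp(q_k − q_{k−1}) for k = 1,…,N, where the term exp(q_{k+1} − q_k) is omitted for k = N and the term exp(q_k − q_{k−1}) is omitted for k = 1. -/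

import Mathlib

/-- The tau-functions of the complex Toda chain: `tauA N ζ r k t` is the sum over
all `k`-element subsets `{l_1 < … < l_k}` of `{1,…,N}` of
`(r_{l_1}⋯r_{l_k})² W(l_1,…,l_k)² exp(-2(ζ_{l_1}+…+ζ_{l_k}) t)`, where
`W(l_1,…,l_k) = ∏_{p<s} (2ζ_s - 2ζ_p)` is the Vandermonde determinant.
In particular `tauA N ζ r 0 t = 1`. -/
noncomputable def tauA (N : ℕ) (ζ r : Fin N → ℂ) (k : ℕ) (t : ℝ) : ℂ :=
  ∑ s ∈ Finset.powersetCard k (Finset.univ : Finset (Fin N)),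
    (∏ j ∈ s, r j) ^ 2 *
    (∏ p ∈ s, ∏ q ∈ s, if p < q then 2 * ζ q - 2 * ζ p else 1) ^ 2 *
    Complex.exp (-2 * (∑ j ∈ s, ζ j) * t)

open Finset Matrix Polynomial


@[to_additive]
lemma prod_orderEmbOfFin' {α M : Type*} [LinearOrder α] [CommMonoid M]
    (s : Finset α) {k : ℕ} (h : s.card = k) (g : α → M) :
    ∏ i : Fin k, g (s.orderEmbOfFin h i) = ∏ l ∈ s, g l := by
  refine Finset.prod_nbij (fun i => s.orderEmbOfFin h i) (fun i _ => s.orderEmbOfFin_mem h i)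
    (fun i _ j _ hij => (s.orderEmbOfFin h).injective hij) ?_ (fun i _ => rfl)
  intro l hl
  have : l ∈ Set.range (s.orderEmbOfFin h) := by
    rw [Finset.range_orderEmbOfFin]; exact hl
  obtain ⟨i, hi⟩ := this
  exact ⟨i, by simp, hi⟩

lemma image_orderEmbOfFin_perm {α : Type*} [LinearOrder α] [DecidableEq α]
    (s : Finset α) {k : ℕ} (h : s.card = k) (σ : Equiv.Perm (Fin k)) :
    Finset.image (fun i => s.orderEmbOfFin h (σ i)) Finset.univ = s := by
  apply Finset.coe_injective
  rw [Finset.coe_image, Finset.coe_univ, Set.image_univ]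
  have : (fun i => s.orderEmbOfFin h (σ i)) = (s.orderEmbOfFin h) ∘ σ := rfl
  rw [this, Set.range_comp]
  rw [Equiv.range_eq_univ, Set.image_univ, Finset.range_orderEmbOfFin]

lemma sum_injective_eq {N k : ℕ} {β : Type*} [AddCommMonoid β] (F : (Fin k → Fin N) → β) :
    (∑ r : Fin k → Fin N, if Function.Injective r then F r else 0)
      = ∑ s ∈ (Finset.powersetCard k (Finset.univ : Finset (Fin N))).attach,
          ∑ σ : Equiv.Perm (Fin k),
            F (fun i => s.1.orderEmbOfFin (Finset.mem_powersetCard.mp s.2).2 (σ i)) := by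
  rw [← Finset.sum_filter]
  rw [Finset.sum_sigma']
  refine (Finset.sum_bij (fun p _ => fun i => p.1.1.orderEmbOfFin
      (Finset.mem_powersetCard.mp p.1.2).2 (p.2 i)) ?_ ?_ ?_ ?_).symm
  · -- maps to filter
    rintro ⟨s, σ⟩ -
    simp only [Finset.mem_filter, Finset.mem_univ, true_and]
    exact (s.1.orderEmbOfFin _).injective.comp σ.injective
  · -- injective
    intro p hp p' hp' hEq
    have himg : p.1.1 = p'.1.1 := by
      rw [← image_orderEmbOfFin_perm p.1.1 (Finset.mem_powersetCard.mp p.1.2).2 p.2,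
          ← image_orderEmbOfFin_perm p'.1.1 (Finset.mem_powersetCard.mp p'.1.2).2 p'.2]
      exact Finset.image_congr (fun i _ => congrFun hEq i)
    obtain ⟨⟨s, hs⟩, σ⟩ := p
    obtain ⟨⟨s', hs'⟩, σ'⟩ := p'
    simp only at himg
    subst himg
    have hσ : σ = σ' := by
      ext i
      have h2 := (s.orderEmbOfFin (Finset.mem_powersetCard.mp hs).2).injective (congrFun hEq i)
      exact congrArg Fin.val h2
    subst hσ
    rfl
  · -- surjective
    intro r hr
    have hrinj : Function.Injective r := by
      simpa using (Finset.mem_filter.mp hr).2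
    have hcard : (Finset.image r Finset.univ).card = k :=
      (Finset.card_image_of_injective _ hrinj).trans (by simp)
    have hmem : Finset.image r Finset.univ ∈
        Finset.powersetCard k (Finset.univ : Finset (Fin N)) :=
      Finset.mem_powersetCard.mpr ⟨Finset.subset_univ _, hcard⟩
    have hval : ∀ i, r i ∈ Finset.image r Finset.univ := fun i =>
      Finset.mem_image_of_mem r (Finset.mem_univ i)
    set emb := (Finset.image r Finset.univ).orderIsoOfFin hcard with hemb
    have hσinj : Function.Injective (fun i => emb.symm ⟨r i, hval i⟩) := by
      intro i j hij
      have h2 : (⟨r i, hval i⟩ : {x // x ∈ Finset.image r Finset.univ}) = ⟨r j, hval j⟩ :=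
        emb.symm.injective hij
      exact hrinj (congrArg Subtype.val h2)
    have hσbij := Finite.injective_iff_bijective.mp hσinj
    refine ⟨⟨⟨Finset.image r Finset.univ, hmem⟩, Equiv.ofBijective _ hσbij⟩,
      Finset.mem_sigma.mpr ⟨Finset.mem_attach _ _, Finset.mem_univ _⟩, ?_⟩
    funext i
    show ((Finset.image r Finset.univ).orderEmbOfFin _ (emb.symm ⟨r i, hval i⟩) : Fin N) = r i
    have : (Finset.image r Finset.univ).orderEmbOfFin
        (Finset.mem_powersetCard.mp hmem).2 (emb.symm ⟨r i, hval i⟩)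
        = (emb (emb.symm ⟨r i, hval i⟩) : Fin N) := rfl
    rw [this, emb.apply_symm_apply]
  · rintro ⟨s, σ⟩ -
    rfl

lemma det_linComb {N k : ℕ} (y μ : Fin N → ℂ) (e f : Fin k → ℕ) (T : Finset (Fin N) → ℂ)
    (hT : ∀ (s : Finset (Fin N)) (h : s.card = k),
      Matrix.det (Matrix.of fun i j : Fin k => μ (s.orderEmbOfFin h i) ^ e j) *
        Matrix.det (Matrix.of fun i j : Fin k => μ (s.orderEmbOfFin h i) ^ f j) = T s) :
    Matrix.det (Matrix.of fun i j : Fin k => ∑ l, y l * μ l ^ (e i + f j))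
      = ∑ s ∈ Finset.powersetCard k (Finset.univ : Finset (Fin N)),
          (∏ l ∈ s, y l) * T s := by
  classical
  set w : Fin N → (Fin k → ℂ) := fun l => fun j => y l * μ l ^ f j with hw
  have h1 : (Matrix.of fun i j : Fin k => ∑ l, y l * μ l ^ (e i + f j))
      = fun i => ∑ l : Fin N, (μ l ^ e i) • w l := by
    funext i j
    simp only [Matrix.of_apply, hw, Finset.sum_apply, Pi.smul_apply, smul_eq_mul, pow_add]
    exact Finset.sum_congr rfl fun l _ => by ring
  have h2 : Matrix.det (Matrix.of fun i j : Fin k => ∑ l, y l * μ l ^ (e i + f j))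
      = ∑ r : Fin k → Fin N, (∏ i, μ (r i) ^ e i) *
          Matrix.det (Matrix.of fun i j : Fin k => y (r i) * μ (r i) ^ f j) := by
    show Matrix.detRowAlternating _ = _
    rw [h1]
    have hms := (Matrix.detRowAlternating (R := ℂ) (n := Fin k)).toMultilinearMap.map_sum
      (α := fun _ : Fin k => Fin N) (g := fun i l => (μ l ^ e i) • w l)
    have hms' : (Matrix.detRowAlternating (fun i => ∑ l : Fin N, μ l ^ e i • w l) : ℂ)
        = ∑ r : Fin k → Fin N, Matrix.detRowAlternating (fun i => μ (r i) ^ e i • w (r i)) := hms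
    rw [hms']
    refine Finset.sum_congr rfl fun r _ => ?_
    have hsm := (Matrix.detRowAlternating (R := ℂ) (n := Fin k)).toMultilinearMap.map_smul_univ
      (fun i => μ (r i) ^ e i) (fun i => w (r i))
    have hsm' : (Matrix.detRowAlternating (fun i => μ (r i) ^ e i • w (r i)) : ℂ)
        = (∏ i, μ (r i) ^ e i) • Matrix.detRowAlternating (fun i => w (r i)) := hsm
    rw [hsm', smul_eq_mul]
    rfl
  rw [h2]
  have h3 : ∀ r : Fin k → Fin N, ¬ Function.Injective r →
      Matrix.det (Matrix.of fun i j : Fin k => y (r i) * μ (r i) ^ f j) = 0 := by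
    intro r hr
    simp only [Function.Injective, not_forall] at hr
    obtain ⟨i, j, hij, hne⟩ := hr
    exact Matrix.det_zero_of_row_eq hne (by funext j'; simp [hij])
  have h4 : (∑ r : Fin k → Fin N, (∏ i, μ (r i) ^ e i) *
          Matrix.det (Matrix.of fun i j : Fin k => y (r i) * μ (r i) ^ f j))
      = ∑ r : Fin k → Fin N, if Function.Injective r then (∏ i, μ (r i) ^ e i) *
          Matrix.det (Matrix.of fun i j : Fin k => y (r i) * μ (r i) ^ f j) else 0 := by
    refine Finset.sum_congr rfl fun r _ => ?_
    by_cases hr : Function.Injective r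
    · rw [if_pos hr]
    · rw [if_neg hr, h3 r hr, mul_zero]
  rw [h4, sum_injective_eq]
  rw [← Finset.sum_attach (Finset.powersetCard k (Finset.univ : Finset (Fin N)))
    (fun s => (∏ l ∈ s, y l) * T s)]
  refine Finset.sum_congr rfl fun s _ => ?_
  set hcard := (Finset.mem_powersetCard.mp s.2).2
  set emb := s.1.orderEmbOfFin hcard with hembdef
  have h5 : ∀ σ : Equiv.Perm (Fin k),
      Matrix.det (Matrix.of fun i j : Fin k => y (emb (σ i)) * μ (emb (σ i)) ^ f j)
        = (Equiv.Perm.sign σ : ℂ) * ((∏ l ∈ s.1, y l) *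
            Matrix.det (Matrix.of fun i j : Fin k => μ (emb i) ^ f j)) := by
    intro σ
    have hperm := Matrix.det_permute σ (Matrix.of fun i j : Fin k => y (emb i) * μ (emb i) ^ f j)
    have heq : (Matrix.of fun i j : Fin k => y (emb (σ i)) * μ (emb (σ i)) ^ f j)
        = (Matrix.of fun i j : Fin k => y (emb i) * μ (emb i) ^ f j).submatrix σ id := rfl
    have hmc : (Matrix.of fun i j : Fin k => y (emb i) * μ (emb i) ^ f j).det
        = (∏ i, y (emb i)) * (Matrix.det fun i j : Fin k => μ (emb i) ^ f j) := by
      convert Matrix.det_mul_column (fun i => y (emb i)) (fun i j : Fin k => μ (emb i) ^ f j)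
    rw [heq, hperm, hmc, prod_orderEmbOfFin' s.1 hcard y]
    have hdd : (Matrix.det fun i j : Fin k => μ (emb i) ^ f j)
        = Matrix.det (Matrix.of fun i j : Fin k => μ (emb i) ^ f j) := rfl
    rw [hdd]
  calc (∑ σ : Equiv.Perm (Fin k), (∏ i, μ (emb (σ i)) ^ e i) *
          Matrix.det (Matrix.of fun i j : Fin k => y (emb (σ i)) * μ (emb (σ i)) ^ f j))
      = (∑ σ : Equiv.Perm (Fin k), (Equiv.Perm.sign σ : ℂ) * ∏ i, μ (emb (σ i)) ^ e i) *
          ((∏ l ∈ s.1, y l) *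
            Matrix.det (Matrix.of fun i j : Fin k => μ (emb i) ^ f j)) := by
        rw [Finset.sum_mul]
        refine Finset.sum_congr rfl fun σ _ => ?_
        rw [h5 σ]; ring
    _ = (∏ l ∈ s.1, y l) * T s.1 := by
        have hdet : (∑ σ : Equiv.Perm (Fin k), (Equiv.Perm.sign σ : ℂ) * ∏ i, μ (emb (σ i)) ^ e i)
            = Matrix.det (Matrix.of fun i j : Fin k => μ (emb i) ^ e j) := by
          rw [Matrix.det_apply']
          refine Finset.sum_congr rfl fun σ _ => ?_
          norm_cast
        rw [hdet, ← hT s.1 hcard]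
        ring

/-- exponent pattern: identity except last gets bumped by `a` -/
def eE (k a : ℕ) : Fin k → ℕ := fun i => if (i : ℕ) = k - 1 then k - 1 + a else i

lemma eE_zero (k : ℕ) (i : Fin k) : eE k 0 i = (i : ℕ) := by
  unfold eE
  split <;> omega

lemma det_pow_eE_one {n : ℕ} (v : Fin (n + 1) → ℂ) :
    Matrix.det (Matrix.of fun i j : Fin (n + 1) => v i ^ (eE (n + 1) 1 j))
      = (∑ i, v i) * Matrix.det (Matrix.vandermonde v) := by
  classical
  set Q : Polynomial ℂ := ∏ i : Fin (n + 1), (X - C (v i)) with hQdef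
  have hmonic : Q.Monic := monic_prod_of_monic _ _ fun i _ => monic_X_sub_C (v i)
  have hdeg : Q.natDegree = n + 1 := by
    rw [hQdef, natDegree_prod_of_monic _ _ fun i _ => monic_X_sub_C (v i)]
    simp [natDegree_X_sub_C]
  have hcoeff : Q.coeff n = -∑ i, v i := by
    have := prod_X_sub_C_coeff_card_pred (Finset.univ : Finset (Fin (n + 1))) v (by simp)
    simpa using this
  have heval : ∀ i, Q.eval (v i) = 0 := by
    intro i
    rw [hQdef, eval_prod]
    exact Finset.prod_eq_zero (Finset.mem_univ i) (by simp)
  have hpow : ∀ i, v i ^ (n + 1) = ∑ jj : Fin (n + 1), (-Q.coeff (jj : ℕ)) * v i ^ (jj : ℕ) := by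
    intro i
    have h0 := heval i
    rw [eval_eq_sum_range, hdeg, Finset.sum_range_succ] at h0
    have hlead : Q.coeff (n + 1) = 1 := by
      have := hmonic.coeff_natDegree
      rwa [hdeg] at this
    rw [hlead, one_mul] at h0
    have : v i ^ (n + 1) = -∑ d ∈ Finset.range (n + 1), Q.coeff d * v i ^ d := by
      linear_combination h0
    rw [this, ← Finset.sum_neg_distrib]
    rw [Fin.sum_univ_eq_sum_range (fun d => -Q.coeff d * v i ^ d)]
    exact Finset.sum_congr rfl fun d _ => by ring
  have hmat : (Matrix.of fun i j : Fin (n + 1) => v i ^ (eE (n + 1) 1 j))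
      = (Matrix.vandermonde v).updateCol (Fin.last n)
          (fun i => ∑ jj : Fin (n + 1), (fun j : Fin (n+1) => -Q.coeff (j : ℕ)) jj •
            Matrix.vandermonde v i jj) := by
    ext i j
    rw [Matrix.updateCol_apply]
    by_cases hj : j = Fin.last n
    · subst hj
      simp only [if_pos rfl, Matrix.of_apply]
      have : eE (n + 1) 1 (Fin.last n) = n + 1 := by simp [eE]
      rw [this]
      simpa [smul_eq_mul] using hpow i
    · rw [if_neg hj]
      have : eE (n + 1) 1 j = (j : ℕ) := by
        have : (j : ℕ) ≠ n := fun h => hj (Fin.ext (by simp [h]))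
        simp [eE, this]
      rw [Matrix.of_apply, this]
      rfl
  rw [hmat, Matrix.det_updateCol_sum]
  have hl : ((Fin.last n : Fin (n+1)) : ℕ) = n := rfl
  rw [smul_eq_mul, hl, hcoeff]
  ring

lemma det_pow_eE {k a : ℕ} (ha : a = 0 ∨ (a = 1 ∧ 0 < k)) (v : Fin k → ℂ) :
    Matrix.det (Matrix.of fun i j : Fin k => v i ^ (eE k a j))
      = (∑ i, v i) ^ a * Matrix.det (Matrix.vandermonde v) := by
  rcases ha with rfl | ⟨rfl, hk⟩
  · simp only [pow_zero, one_mul]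
    congr 1
    ext i j
    rw [Matrix.of_apply, eE_zero]
    rfl
  · obtain ⟨n, rfl⟩ := Nat.exists_eq_succ_of_ne_zero hk.ne'
    rw [det_pow_eE_one, pow_one]

lemma vandermonde_emb {N k : ℕ} (μ : Fin N → ℂ) (s : Finset (Fin N)) (h : s.card = k) :
    Matrix.det (Matrix.vandermonde (fun i => μ (s.orderEmbOfFin h i)))
      = ∏ p ∈ s, ∏ q ∈ s, if p < q then μ q - μ p else 1 := by
  rw [Matrix.det_vandermonde]
  rw [← prod_orderEmbOfFin' s h (fun p => ∏ q ∈ s, if p < q then μ q - μ p else 1)]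
  refine Finset.prod_congr rfl fun i _ => ?_
  rw [← prod_orderEmbOfFin' s h
    (fun q => if s.orderEmbOfFin h i < q then μ q - μ (s.orderEmbOfFin h i) else 1)]
  have h1 : Finset.Ioi i = Finset.filter (fun j => i < j) Finset.univ := by ext j; simp
  rw [h1, Finset.prod_filter]
  refine Finset.prod_congr rfl fun j _ => ?_
  by_cases hij : i < j
  · rw [if_pos hij, if_pos (by exact (s.orderEmbOfFin h).lt_iff_lt.mpr hij)]
  · rw [if_neg hij, if_neg (fun hc => hij ((s.orderEmbOfFin h).lt_iff_lt.mp hc))]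

/-- The main Cauchy–Binet style evaluation of the Hankel-type determinants. -/
noncomputable def SSum {N : ℕ} (y μ : Fin N → ℂ) (k c : ℕ) : ℂ :=
  ∑ s ∈ Finset.powersetCard k (Finset.univ : Finset (Fin N)),
    (∏ l ∈ s, y l) * ((∑ l ∈ s, μ l) ^ c *
      (∏ p ∈ s, ∏ q ∈ s, if p < q then μ q - μ p else 1) ^ 2)

lemma det_hankel_eq {N : ℕ} (y μ : Fin N → ℂ) (k a b : ℕ)
    (ha : a = 0 ∨ (a = 1 ∧ 0 < k)) (hb : b = 0 ∨ (b = 1 ∧ 0 < k)) :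
    Matrix.det (Matrix.of fun i j : Fin k => ∑ l, y l * μ l ^ (eE k a i + eE k b j))
      = SSum y μ k (a + b) := by
  unfold SSum
  refine det_linComb y μ (eE k a) (eE k b) _ ?_
  intro s hcard
  rw [det_pow_eE ha, det_pow_eE hb]
  rw [vandermonde_emb μ s hcard]
  rw [sum_orderEmbOfFin' s hcard μ]
  rw [pow_add]
  ring

noncomputable def tauD (N : ℕ) (ζ r : Fin N → ℂ) (k : ℕ) (t : ℝ) : ℂ :=
  ∑ s ∈ Finset.powersetCard k (Finset.univ : Finset (Fin N)),
    (∏ j ∈ s, r j) ^ 2 *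
    (∏ p ∈ s, ∏ q ∈ s, if p < q then 2 * ζ q - 2 * ζ p else 1) ^ 2 *
    ((-2) * (∑ j ∈ s, ζ j)) *
    Complex.exp (-2 * (∑ j ∈ s, ζ j) * t)

noncomputable def tauDD (N : ℕ) (ζ r : Fin N → ℂ) (k : ℕ) (t : ℝ) : ℂ :=
  ∑ s ∈ Finset.powersetCard k (Finset.univ : Finset (Fin N)),
    (∏ j ∈ s, r j) ^ 2 *
    (∏ p ∈ s, ∏ q ∈ s, if p < q then 2 * ζ q - 2 * ζ p else 1) ^ 2 *
    ((-2) * (∑ j ∈ s, ζ j)) ^ 2 *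
    Complex.exp (-2 * (∑ j ∈ s, ζ j) * t)

lemma sq_ite_prod {N : ℕ} (s : Finset (Fin N)) (F G : Fin N → Fin N → ℂ)
    (h : ∀ p q, p < q → F p q ^ 2 = G p q ^ 2) :
    (∏ p ∈ s, ∏ q ∈ s, if p < q then F p q else 1) ^ 2
      = (∏ p ∈ s, ∏ q ∈ s, if p < q then G p q else 1) ^ 2 := by
  rw [← Finset.prod_pow, ← Finset.prod_pow]
  refine Finset.prod_congr rfl fun p _ => ?_
  rw [← Finset.prod_pow, ← Finset.prod_pow]
  refine Finset.prod_congr rfl fun q _ => ?_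
  by_cases hpq : p < q
  · rw [if_pos hpq, if_pos hpq, h p q hpq]
  · rw [if_neg hpq, if_neg hpq]

section fixed
variable {N : ℕ} (ζ r : Fin N → ℂ) (t : ℝ)

lemma SSum_tau (k c : ℕ) :
    SSum (fun l => r l ^ 2 * Complex.exp (-2 * ζ l * t)) (fun l => -2 * ζ l) k c
      = ∑ s ∈ Finset.powersetCard k (Finset.univ : Finset (Fin N)),
          (∏ j ∈ s, r j) ^ 2 *
          (∏ p ∈ s, ∏ q ∈ s, if p < q then 2 * ζ q - 2 * ζ p else 1) ^ 2 *
          ((-2) * (∑ j ∈ s, ζ j)) ^ c *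
          Complex.exp (-2 * (∑ j ∈ s, ζ j) * t) := by
  unfold SSum
  refine Finset.sum_congr rfl fun s _ => ?_
  have hy : (∏ l ∈ s, r l ^ 2 * Complex.exp (-2 * ζ l * t))
      = (∏ j ∈ s, r j) ^ 2 * Complex.exp (-2 * (∑ j ∈ s, ζ j) * t) := by
    rw [Finset.prod_mul_distrib, Finset.prod_pow, ← Complex.exp_sum]
    congr 2
    rw [Finset.sum_congr rfl (fun l _ => by ring : ∀ l ∈ s, -2 * ζ l * (t:ℂ) = ζ l * (-2 * t)),
      ← Finset.sum_mul]
    ring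
  have hμ : (∑ l ∈ s, -2 * ζ l) = (-2) * ∑ j ∈ s, ζ j := by
    rw [Finset.mul_sum]
  have hW : (∏ p ∈ s, ∏ q ∈ s, if p < q then -2 * ζ q - -2 * ζ p else 1) ^ 2
      = (∏ p ∈ s, ∏ q ∈ s, if p < q then 2 * ζ q - 2 * ζ p else 1) ^ 2 :=
    sq_ite_prod s _ _ (fun p q _ => by ring)
  rw [hy, hμ, hW]
  ring

lemma SSum_eq_tauA (k : ℕ) :
    SSum (fun l => r l ^ 2 * Complex.exp (-2 * ζ l * t)) (fun l => -2 * ζ l) k 0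
      = tauA N ζ r k t := by
  rw [SSum_tau]
  exact Finset.sum_congr rfl fun s _ => by rw [pow_zero]; ring

lemma SSum_eq_tauD (k : ℕ) :
    SSum (fun l => r l ^ 2 * Complex.exp (-2 * ζ l * t)) (fun l => -2 * ζ l) k 1
      = tauD N ζ r k t := by
  rw [SSum_tau]
  exact Finset.sum_congr rfl fun s _ => by rw [pow_one]

lemma SSum_eq_tauDD (k : ℕ) :
    SSum (fun l => r l ^ 2 * Complex.exp (-2 * ζ l * t)) (fun l => -2 * ζ l) k 2
      = tauDD N ζ r k t := by
  rw [SSum_tau]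
  unfold tauDD
  exact Finset.sum_congr rfl fun s _ => by ring

lemma hasDerivAt_tauA (k : ℕ) : HasDerivAt (fun u => tauA N ζ r k u) (tauD N ζ r k t) t := by
  unfold tauA tauD
  refine HasDerivAt.fun_sum fun s _ => ?_
  set C := (∏ j ∈ s, r j) ^ 2 *
    (∏ p ∈ s, ∏ q ∈ s, if p < q then 2 * ζ q - 2 * ζ p else 1) ^ 2 with hC
  set c := (-2) * (∑ j ∈ s, ζ j) with hc
  have h1 : HasDerivAt (fun z : ℂ => Complex.exp (c * z)) (Complex.exp (c * (t:ℂ)) * c) (t:ℂ) := by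
    simpa using ((hasDerivAt_id (t:ℂ)).const_mul c).cexp
  have h2 := h1.comp_ofReal
  have h3 := h2.const_mul C
  convert h3 using 1
  · rfl
  ring

lemma hasDerivAt_tauD (k : ℕ) : HasDerivAt (fun u => tauD N ζ r k u) (tauDD N ζ r k t) t := by
  unfold tauD tauDD
  refine HasDerivAt.fun_sum fun s _ => ?_
  set C := (∏ j ∈ s, r j) ^ 2 *
    (∏ p ∈ s, ∏ q ∈ s, if p < q then 2 * ζ q - 2 * ζ p else 1) ^ 2 with hC
  set c := (-2) * (∑ j ∈ s, ζ j) with hc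
  have h1 : HasDerivAt (fun z : ℂ => Complex.exp (c * z)) (Complex.exp (c * (t:ℂ)) * c) (t:ℂ) := by
    simpa using ((hasDerivAt_id (t:ℂ)).const_mul c).cexp
  have h2 := h1.comp_ofReal
  have h3 := h2.const_mul (C * c)
  convert h3 using 1
  · rfl
  ring

end fixed

lemma hirota_key {N : ℕ} (n : ℕ) (y μ : Fin N → ℂ) (hdet : SSum y μ n 0 ≠ 0) :
    SSum y μ (n + 1) 2 * SSum y μ (n + 1) 0 - SSum y μ (n + 1) 1 * SSum y μ (n + 1) 1
      = SSum y μ (n + 2) 0 * SSum y μ n 0 := by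
  classical
  set H : ℕ → ℂ := fun d => ∑ l, y l * μ l ^ d with hH
  set Abl : Matrix (Fin n) (Fin n) ℂ := Matrix.of fun i j => H ((i : ℕ) + (j : ℕ)) with hAbl
  set Bbl : Matrix (Fin n) (Fin 2) ℂ := Matrix.of fun i b => H ((i : ℕ) + (n + (b : ℕ))) with hBbl
  set Cbl : Matrix (Fin 2) (Fin n) ℂ := Matrix.of fun a j => H ((n + (a : ℕ)) + (j : ℕ)) with hCbl
  set Dbl : Matrix (Fin 2) (Fin 2) ℂ :=
    Matrix.of fun a b => H ((n + (a : ℕ)) + (n + (b : ℕ))) with hDbl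
  -- determinant of the A block
  have hdetAbl : Abl.det = SSum y μ n 0 := by
    have := det_hankel_eq y μ n 0 0 (Or.inl rfl) (Or.inl rfl)
    rw [← this]
    congr 1
    ext i j
    simp only [Matrix.of_apply, hAbl, hH, eE_zero]
  have hAne : Abl.det ≠ 0 := by rw [hdetAbl]; exact hdet
  have hinv : Invertible Abl := Abl.invertibleOfIsUnitDet (IsUnit.mk0 _ hAne)
  set S : Matrix (Fin 2) (Fin 2) ℂ := Dbl - Cbl * ⅟Abl * Bbl with hS
  -- the big determinant via Schur
  have hBig : SSum y μ (n + 2) 0 = Abl.det * S.det := by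
    have h1 := det_hankel_eq y μ (n + 2) 0 0 (Or.inl rfl) (Or.inl rfl)
    rw [← h1]
    have h2 : (Matrix.of fun i j : Fin (n+2) => ∑ l, y l * μ l ^ (eE (n+2) 0 i + eE (n+2) 0 j))
        = Matrix.of fun i j : Fin (n+2) => H ((i : ℕ) + (j : ℕ)) := by
      ext i j
      simp only [Matrix.of_apply, hH, eE_zero]
    rw [h2]
    have h3 : ((Matrix.of fun i j : Fin (n+2) => H ((i : ℕ) + (j : ℕ))).submatrix
        finSumFinEquiv finSumFinEquiv) = Matrix.fromBlocks Abl Bbl Cbl Dbl := by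
      ext i j
      rcases i with i | a <;> rcases j with j | b <;>
        simp [Matrix.fromBlocks, hAbl, hBbl, hCbl, hDbl, Matrix.submatrix_apply,
          finSumFinEquiv_apply_left, finSumFinEquiv_apply_right, Fin.coe_castAdd, Fin.coe_natAdd]
    rw [← Matrix.det_submatrix_equiv_self finSumFinEquiv, h3, Matrix.det_fromBlocks₁₁]
  -- bordered determinants
  have hX : ∀ a b : Fin 2, SSum y μ (n + 1) ((a : ℕ) + (b : ℕ)) = Abl.det * S a b := by
    intro a b
    have hfa : (a : ℕ) = 0 ∨ ((a : ℕ) = 1 ∧ 0 < n + 1) := by have := a.2; omega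
    have hfb : (b : ℕ) = 0 ∨ ((b : ℕ) = 1 ∧ 0 < n + 1) := by have := b.2; omega
    have h1 := det_hankel_eq y μ (n + 1) (a : ℕ) (b : ℕ) hfa hfb
    rw [← h1]
    have key : ∀ (i' j' : Fin (n+1)), eE (n+1) (a:ℕ) i' + eE (n+1) (b:ℕ) j'
        = (if (i' : ℕ) = n then n + (a:ℕ) else (i' : ℕ))
          + (if (j' : ℕ) = n then n + (b:ℕ) else (j' : ℕ)) := by
      intro i' j'
      unfold eE
      congr 1 <;> · split <;> split <;> omega
    have h2 : ((Matrix.of fun i j : Fin (n+1) =>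
        ∑ l, y l * μ l ^ (eE (n+1) (a:ℕ) i + eE (n+1) (b:ℕ) j)).submatrix
          finSumFinEquiv finSumFinEquiv)
        = Matrix.fromBlocks Abl (Matrix.of fun i (_ : Fin 1) => H ((i : ℕ) + (n + (b : ℕ))))
            (Matrix.of fun (_ : Fin 1) j => H ((n + (a : ℕ)) + (j : ℕ)))
            (Matrix.of fun (_ : Fin 1) (_ : Fin 1) => H ((n + (a : ℕ)) + (n + (b : ℕ)))) := by
      have expL : ∀ (i : Fin n) (c : ℕ), eE (n+1) c (Fin.castAdd 1 i) = (i : ℕ) := by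
        intro i c
        have hi := i.2
        unfold eE
        simp only [Fin.coe_castAdd]
        rw [if_neg (by omega)]
      have expR : ∀ (a' : Fin 1) (c : ℕ), eE (n+1) c (Fin.natAdd n a') = n + c := by
        intro a' c
        have ha' := a'.2
        unfold eE
        simp only [Fin.coe_natAdd]
        rw [if_pos (by omega)]
        omega
      ext i j
      rcases i with i | a' <;> rcases j with j | b' <;>
        simp [Matrix.submatrix_apply, finSumFinEquiv_apply_left, finSumFinEquiv_apply_right,
          expL, expR, Matrix.fromBlocks, hAbl, hH]
    rw [← Matrix.det_submatrix_equiv_self finSumFinEquiv, h2, Matrix.det_fromBlocks₁₁,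
      Matrix.det_fin_one]
    congr 1
  have e00 := hX 0 0
  have e01 := hX 0 1
  have e10 := hX 1 0
  have e11 := hX 1 1
  norm_num at e00 e01 e10 e11
  have hsym : S 0 1 = S 1 0 := mul_left_cancel₀ hAne (e01.symm.trans e10)
  rw [e00, e01, e11, hBig, ← hdetAbl, Matrix.det_fin_two, hsym]
  ring

lemma tauA_zero {N : ℕ} (ζ r : Fin N → ℂ) (t : ℝ) : tauA N ζ r 0 t = 1 := by
  simp [tauA]

lemma tauA_big {N k : ℕ} (ζ r : Fin N → ℂ) (t : ℝ) (h : N < k) : tauA N ζ r k t = 0 := by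
  unfold tauA
  rw [Finset.powersetCard_eq_empty.mpr (by simpa using h), Finset.sum_empty]

lemma tauD_zero {N : ℕ} (ζ r : Fin N → ℂ) (t : ℝ) : tauD N ζ r 0 t = 0 := by
  simp [tauD]

lemma tauDD_zero {N : ℕ} (ζ r : Fin N → ℂ) (t : ℝ) : tauDD N ζ r 0 t = 0 := by
  simp [tauDD]

lemma hirota_tau {N : ℕ} (ζ r : Fin N → ℂ) (m : ℕ) (hm : 1 ≤ m) (t : ℝ)
    (h0 : tauA N ζ r (m - 1) t ≠ 0) :
    tauDD N ζ r m t * tauA N ζ r m t - tauD N ζ r m t * tauD N ζ r m t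
      = tauA N ζ r (m + 1) t * tauA N ζ r (m - 1) t := by
  obtain ⟨n, rfl⟩ : ∃ n, m = n + 1 := ⟨m - 1, (Nat.succ_pred_eq_of_pos hm).symm⟩
  have hn : n + 1 - 1 = n := rfl
  rw [hn] at h0 ⊢
  have h0' : SSum (fun l => r l ^ 2 * Complex.exp (-2 * ζ l * t)) (fun l => -2 * ζ l) n 0 ≠ 0 := by
    rw [SSum_eq_tauA]; exact h0
  have key := hirota_key n _ _ h0'
  rw [SSum_eq_tauA, SSum_eq_tauA, SSum_eq_tauA, SSum_eq_tauD, SSum_eq_tauDD] at key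
  linear_combination key

theorem stmt_6 (N : ℕ) (hN : 2 ≤ N) (ζ r : Fin N → ℂ)
    (htrace : ∑ j, ζ j = 0)
    (I : Set ℝ) (hIopen : IsOpen I) (hIconn : I.OrdConnected)
    (hA : ∀ k : ℕ, 1 ≤ k → k ≤ N → ∀ t ∈ I, tauA N ζ r k t ≠ 0)
    (c : ℂ) (q q' q'' : ℝ → Fin N → ℂ)
    (hq' : ∀ (k : Fin N), ∀ t ∈ I, HasDerivAt (fun s => q s k) (q' t k) t)
    (hq'' : ∀ (k : Fin N), ∀ t ∈ I, HasDerivAt (fun s => q' s k) (q'' t k) t)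
    (hq : ∀ t ∈ I, ∀ k : Fin N,
      Complex.exp (q t k - c) = tauA N ζ r ((k : ℕ) + 1) t / tauA N ζ r (k : ℕ) t) :
    ∀ t ∈ I, ∀ k : Fin N,
      q'' t k =
        (if h : (k : ℕ) + 1 < N then Complex.exp (q t ⟨(k : ℕ) + 1, h⟩ - q t k) else 0)
        - (if 0 < (k : ℕ) then
            Complex.exp (q t k -
              q t ⟨(k : ℕ) - 1, Nat.lt_of_le_of_lt (Nat.sub_le _ _) k.isLt⟩)
          else 0) := by
  intro t ht k
  have hAne : ∀ (j : ℕ), j ≤ N → ∀ u, u ∈ I → tauA N ζ r j u ≠ 0 := by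
    intro j hj u hu
    rcases Nat.eq_zero_or_pos j with rfl | hj1
    · rw [tauA_zero]; exact one_ne_zero
    · exact hA j hj1 hj u hu
  have hq'eq : ∀ (j : Fin N), ∀ u ∈ I, q' u j
      = tauD N ζ r ((j:ℕ)+1) u / tauA N ζ r ((j:ℕ)+1) u
        - tauD N ζ r (j:ℕ) u / tauA N ζ r (j:ℕ) u := by
    intro j u hu
    have hAj : tauA N ζ r (j:ℕ) u ≠ 0 := hAne j (le_of_lt j.isLt) u hu
    have hAj1 : tauA N ζ r ((j:ℕ)+1) u ≠ 0 := hAne ((j:ℕ)+1) j.isLt u hu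
    have hg : HasDerivAt (fun v => tauA N ζ r ((j:ℕ)+1) v / tauA N ζ r (j:ℕ) v)
        ((tauD N ζ r ((j:ℕ)+1) u * tauA N ζ r (j:ℕ) u
          - tauA N ζ r ((j:ℕ)+1) u * tauD N ζ r (j:ℕ) u) / (tauA N ζ r (j:ℕ) u)^2) u :=
      (hasDerivAt_tauA ζ r u ((j:ℕ)+1)).div (hasDerivAt_tauA ζ r u (j:ℕ)) hAj
    have hl : HasDerivAt (fun v => Complex.exp (q v j - c))
        (Complex.exp (q u j - c) * q' u j) u := ((hq' j u hu).sub_const c).cexp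
    have hee : (fun v => Complex.exp (q v j - c))
        =ᶠ[nhds u] (fun v => tauA N ζ r ((j:ℕ)+1) v / tauA N ζ r (j:ℕ) v) :=
      Filter.eventuallyEq_of_mem (hIopen.mem_nhds hu) (fun v hv => hq v hv j)
    have huniq := (hl.congr_of_eventuallyEq hee.symm).unique hg
    rw [hq u hu j] at huniq
    refine mul_left_cancel₀ (div_ne_zero hAj1 hAj) ?_
    rw [huniq]
    field_simp
  set κ := (k : ℕ) with hκdef
  have hAκ : tauA N ζ r κ t ≠ 0 := hAne κ (le_of_lt k.isLt) t ht
  have hAκ1 : tauA N ζ r (κ+1) t ≠ 0 := hAne (κ+1) k.isLt t ht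
  have hG : HasDerivAt (fun v => tauD N ζ r (κ+1) v / tauA N ζ r (κ+1) v
      - tauD N ζ r κ v / tauA N ζ r κ v)
      ((tauDD N ζ r (κ+1) t * tauA N ζ r (κ+1) t - tauD N ζ r (κ+1) t * tauD N ζ r (κ+1) t)
          / (tauA N ζ r (κ+1) t)^2
        - (tauDD N ζ r κ t * tauA N ζ r κ t - tauD N ζ r κ t * tauD N ζ r κ t)
          / (tauA N ζ r κ t)^2) t :=
    ((hasDerivAt_tauD ζ r t (κ+1)).div (hasDerivAt_tauA ζ r t (κ+1)) hAκ1).sub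
      ((hasDerivAt_tauD ζ r t κ).div (hasDerivAt_tauA ζ r t κ) hAκ)
  have hee2 : (fun v => q' v k) =ᶠ[nhds t]
      (fun v => tauD N ζ r (κ+1) v / tauA N ζ r (κ+1) v
        - tauD N ζ r κ v / tauA N ζ r κ v) :=
    Filter.eventuallyEq_of_mem (hIopen.mem_nhds ht) (fun v hv => hq'eq k v hv)
  have hq''val := (hq'' k t ht).unique (hG.congr_of_eventuallyEq hee2)
  have hir1 : tauDD N ζ r (κ+1) t * tauA N ζ r (κ+1) t
      - tauD N ζ r (κ+1) t * tauD N ζ r (κ+1) t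
      = tauA N ζ r (κ+2) t * tauA N ζ r κ t := by
    have h := hirota_tau ζ r (κ+1) (by omega) t (by simpa using hAκ)
    simpa using h
  have hratio : ∀ (j j' : Fin N), Complex.exp (q t j - q t j')
      = (tauA N ζ r ((j:ℕ)+1) t / tauA N ζ r (j:ℕ) t)
        / (tauA N ζ r ((j':ℕ)+1) t / tauA N ζ r (j':ℕ) t) := by
    intro j j'
    rw [show q t j - q t j' = (q t j - c) - (q t j' - c) by ring, Complex.exp_sub,
      hq t ht j, hq t ht j']
  rw [hq''val, hir1]
  have hsec : 0 < κ →
      Complex.exp (q t k - q t ⟨κ-1, Nat.lt_of_le_of_lt (Nat.sub_le _ _) k.isLt⟩)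
        = tauA N ζ r (κ+1) t * tauA N ζ r (κ-1) t / (tauA N ζ r κ t)^2 := by
    intro hκpos
    have hAm : tauA N ζ r (κ-1) t ≠ 0 := hAne (κ-1) (by omega) t ht
    rw [hratio k ⟨κ-1, Nat.lt_of_le_of_lt (Nat.sub_le _ _) k.isLt⟩]
    have hval : ((⟨κ-1, Nat.lt_of_le_of_lt (Nat.sub_le _ _) k.isLt⟩ : Fin N) : ℕ) = κ - 1 := rfl
    rw [hval]
    have hsucc : κ - 1 + 1 = κ := Nat.succ_pred_eq_of_pos hκpos
    rw [hsucc]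
    rw [← hκdef]
    field_simp
  by_cases hlt : κ + 1 < N
  · rw [dif_pos hlt]
    have hA2 : tauA N ζ r (κ+2) t ≠ 0 := hAne (κ+2) hlt t ht
    have hfirst : Complex.exp (q t ⟨κ+1, hlt⟩ - q t k)
        = tauA N ζ r (κ+2) t * tauA N ζ r κ t / (tauA N ζ r (κ+1) t)^2 := by
      rw [hratio ⟨κ+1,hlt⟩ k]
      have hval : ((⟨κ+1, hlt⟩ : Fin N) : ℕ) = κ + 1 := rfl
      rw [hval]
      have h21 : κ + 1 + 1 = κ + 2 := rfl
      rw [h21]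
      rw [← hκdef]
      field_simp
    rw [hfirst]
    rcases Nat.eq_zero_or_pos κ with hκ0 | hκpos
    · rw [if_neg (by omega)]
      rw [hκ0, tauDD_zero, tauD_zero, tauA_zero]
      ring
    · rw [if_pos hκpos, hsec hκpos]
      have hir2 : tauDD N ζ r κ t * tauA N ζ r κ t - tauD N ζ r κ t * tauD N ζ r κ t
          = tauA N ζ r (κ+1) t * tauA N ζ r (κ-1) t :=
        hirota_tau ζ r κ hκpos t (hAne (κ-1) (by omega) t ht)
      rw [hir2]
  · rw [dif_neg hlt]
    have hzero : tauA N ζ r (κ+2) t = 0 := tauA_big ζ r t (by have := k.isLt; omega)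
    rw [hzero]
    have hκpos : 0 < κ := by have := k.isLt; omega
    rw [if_pos hκpos, hsec hκpos]
    have hir2 : tauDD N ζ r κ t * tauA N ζ r κ t - tauD N ζ r κ t * tauD N ζ r κ t
        = tauA N ζ r (κ+1) t * tauA N ζ r (κ-1) t :=
      hirota_tau ζ r κ hκpos t (hAne (κ-1) (by omega) t ht)
    rw [hir2]
    ring
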